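/- Let H be a real Hilbert space, ℒ : H × H → ℝ a bounded bilinear form, p > 0, and suppose ℒ_p(w,v) := ℒ(w,v) + p⟨Jw, Jv⟩ is bounded and coercive on H, where J : H → L²(Θ) is a bounded linear map. Suppose further J is compact, ℒ_p induces an invertible operator X_p (by Lax–Milgram), and the only u ∈ H with ℒ(u,v) = 0 for all v ∈ H is u = 0. Then for every bounded linear functional ℱ on H there exists a unique u ∈ H with ℒ(u,v) = ℱ(v) for all v ∈ H. -/

import Mathlib

open MeasureTheory

section FredholmAux

variable {X : Type*} [NormedAddCommGroup X] [NormedSpace ℝ X] [CompleteSpace X]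

lemma fredholm_surjective (K : X →L[ℝ] X) (hK : IsCompactOperator (⇑K))
    (hinj : ∀ u : X, u = K u → u = 0) :
    Function.Surjective (⇑(1 - K : X →L[ℝ] X)) := by
  set T : X →L[ℝ] X := 1 - K with hT
  have hTapp : ∀ x, T x = x - K x := fun x => rfl
  have hTinj : ∀ x : X, T x = 0 → x = 0 := by
    intro x hx
    exact hinj x (by rw [hTapp, sub_eq_zero] at hx; exact hx)
  -- compact image of the closed unit ball
  obtain ⟨s, hs, hKs⟩ : ∃ s : Set X, IsCompact s ∧ ∀ x : X, ‖x‖ ≤ 1 → K x ∈ s := by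
    refine ⟨closure (⇑K '' Metric.closedBall 0 1), ?_, ?_⟩
    · exact IsCompactOperator.isCompact_closure_image_closedBall (f := K.toLinearMap) hK 1
    · intro x hx
      exact subset_closure ⟨x, by simpa [Metric.mem_closedBall, dist_eq_norm] using hx, rfl⟩
  -- T is bounded below
  obtain ⟨c0, hc0, hbb⟩ : ∃ c0 : ℝ, 0 < c0 ∧ ∀ x : X, c0 * ‖x‖ ≤ ‖T x‖ := by
    by_contra hcon
    push_neg at hcon
    have hseq : ∀ n : ℕ, ∃ u : X, ‖u‖ = 1 ∧ ‖T u‖ < 1 / (n + 1) := by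
      intro n
      obtain ⟨x, hx⟩ := hcon (1 / (n + 1)) (by positivity)
      have hx0 : x ≠ 0 := by
        intro h; rw [h] at hx; simp at hx
      refine ⟨‖x‖⁻¹ • x, ?_, ?_⟩
      · rw [norm_smul, norm_inv, norm_norm, inv_mul_cancel₀ (norm_ne_zero_iff.mpr hx0)]
      · rw [_root_.map_smul, norm_smul, norm_inv, norm_norm]
        rw [inv_mul_lt_iff₀ (norm_pos_iff.mpr hx0)]
        linarith [hx]
    choose u hu1 hu2 using hseq
    have hmem : ∀ n, K (u n) ∈ s := fun n => hKs _ (le_of_eq (hu1 n))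
    obtain ⟨y, -, φ, hφ, hconv⟩ := hs.tendsto_subseq hmem
    have hTu : Filter.Tendsto (fun n => T (u n)) Filter.atTop (nhds 0) := by
      rw [tendsto_zero_iff_norm_tendsto_zero]
      refine squeeze_zero (fun n => norm_nonneg _) (fun n => le_of_lt (hu2 n)) ?_
      exact tendsto_one_div_add_atTop_nhds_zero_nat
    have hTuφ : Filter.Tendsto (fun n => T (u (φ n))) Filter.atTop (nhds 0) :=
      hTu.comp hφ.tendsto_atTop
    have huφ : Filter.Tendsto (fun n => u (φ n)) Filter.atTop (nhds y) := by
      have : (fun n => u (φ n)) = fun n => T (u (φ n)) + K (u (φ n)) := by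
        funext n; rw [hTapp]; abel
      rw [this]
      simpa using hTuφ.add hconv
    have hy1 : ‖y‖ = 1 := by
      have := (continuous_norm.tendsto y).comp huφ
      have h2 : Filter.Tendsto (fun n => ‖u (φ n)‖) Filter.atTop (nhds 1) := by
        simpa [hu1] using Filter.tendsto_const_nhds (α := ℝ) (f := Filter.atTop (α := ℕ)) (a := 1)
      exact tendsto_nhds_unique this h2
    have hy0 : T y = 0 := by
      have := (T.continuous.tendsto y).comp huφ
      exact tendsto_nhds_unique this hTuφ
    have := hTinj y hy0
    rw [this, norm_zero] at hy1
    norm_num at hy1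
  -- antilipschitz for powers, closedness, injectivity
  have hA : AntilipschitzWith ⟨c0⁻¹, le_of_lt (inv_pos.mpr hc0)⟩ ⇑T := by
    apply T.antilipschitz_of_bound
    intro x
    change ‖x‖ ≤ c0⁻¹ * ‖T x‖
    rw [inv_mul_eq_div, le_div_iff₀ hc0]
    linarith [hbb x]
  have hAn : ∀ n : ℕ, ∃ b : NNReal, AntilipschitzWith b ⇑(T ^ n) := by
    intro n
    induction n with
    | zero => exact ⟨1, by rw [pow_zero]; exact (by simpa using AntilipschitzWith.id (α := X))⟩
    | succ n ih =>
      obtain ⟨b, hb⟩ := ih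
      refine ⟨⟨c0⁻¹, le_of_lt (inv_pos.mpr hc0)⟩ * b, ?_⟩
      rw [pow_succ]
      exact hb.comp hA
  have hclosed : ∀ n : ℕ, IsClosed ((LinearMap.range ((T ^ n : X →L[ℝ] X) : X →ₗ[ℝ] X) : Submodule ℝ X) : Set X) := by
    intro n
    obtain ⟨b, hb⟩ := hAn n
    have := hb.isClosed_range (T ^ n).uniformContinuous
    simpa only [LinearMap.coe_range, ContinuousLinearMap.coe_coe] using this
  have hpinj : ∀ n : ℕ, Function.Injective ⇑(T ^ n) := fun n => (hAn n).choose_spec.injective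
  -- suppose not surjective
  by_contra hsurj
  rw [Function.Surjective] at hsurj
  push_neg at hsurj
  obtain ⟨z, hz⟩ := hsurj
  set R : ℕ → Submodule ℝ X := fun n => LinearMap.range ((T ^ n : X →L[ℝ] X) : X →ₗ[ℝ] X) with hR
  have hstep : ∀ n, R (n + 1) ≤ R n := by
    intro n x hx
    obtain ⟨a, ha⟩ := hx
    exact ⟨T a, by simp only [ContinuousLinearMap.coe_coe] at ha ⊢; rw [← ha, pow_succ, ContinuousLinearMap.mul_apply]⟩
  have hmono : ∀ {n m : ℕ}, n ≤ m → R m ≤ R n := by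
    intro n m h
    induction h with
    | refl => exact le_refl _
    | step h ih => exact le_trans (hstep _) ih
  have hmaps : ∀ n (x : X), x ∈ R n → T x ∈ R (n + 1) := by
    intro n x hx
    obtain ⟨a, ha⟩ := hx
    exact ⟨a, by simp only [ContinuousLinearMap.coe_coe] at ha ⊢; rw [pow_succ', ContinuousLinearMap.mul_apply, ha]⟩
  have hzn : ∀ n : ℕ, (T ^ n) z ∈ R n ∧ (T ^ n) z ∉ R (n + 1) := by
    intro n
    refine ⟨⟨z, rfl⟩, ?_⟩
    rintro ⟨a, ha⟩
    simp only [ContinuousLinearMap.coe_coe] at ha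
    have : (T ^ n) (T a) = (T ^ n) z := by
      rw [← ha, pow_succ, ContinuousLinearMap.mul_apply]
    exact hz a (hpinj n this)
  -- Riesz sequence
  have hriesz : ∀ n : ℕ, ∃ e : X, e ∈ R n ∧ ‖e‖ = 1 ∧
      ∀ w ∈ R (n + 1), (1 / 2 : ℝ) ≤ ‖e - w‖ := by
    intro n
    haveI : CompleteSpace (R n) := (hclosed n).completeSpace_coe
    set F : Subspace ℝ (R n) := (R (n + 1)).comap (R n).subtype with hF
    have hFc : IsClosed (F : Set (R n)) := by
      have : (F : Set (R n)) = ((R n).subtype) ⁻¹' (R (n + 1) : Set X) := rfl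
      rw [this]
      exact (hclosed (n + 1)).preimage continuous_subtype_val
    have hFne : ∃ x : R n, x ∉ F := by
      refine ⟨⟨(T ^ n) z, (hzn n).1⟩, ?_⟩
      intro hmem
      exact (hzn n).2 hmem
    obtain ⟨x₀, hx₀F, hx₀⟩ := riesz_lemma hFc hFne (r := 1 / 2) (by norm_num)
    have hx₀ne : (x₀ : X) ≠ 0 := by
      intro h
      apply hx₀F
      have : x₀ = 0 := Subtype.ext h
      rw [this]; exact F.zero_mem
    have hnx : (0 : ℝ) < ‖(x₀ : X)‖ := norm_pos_iff.mpr hx₀ne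
    refine ⟨‖(x₀ : X)‖⁻¹ • (x₀ : X), (R n).smul_mem _ x₀.2, ?_, ?_⟩
    · rw [norm_smul, norm_inv, norm_norm, inv_mul_cancel₀ (ne_of_gt hnx)]
    · intro w hw
      have hwRn : w ∈ R n := hstep n hw
      have hyF : (⟨‖(x₀ : X)‖ • w, (R n).smul_mem _ hwRn⟩ : R n) ∈ F := by
        exact (R (n + 1)).smul_mem _ hw
      have hkey := hx₀ _ hyF
      have hnorm : ‖x₀ - (⟨‖(x₀ : X)‖ • w, (R n).smul_mem _ hwRn⟩ : R n)‖
          = ‖(x₀ : X) - ‖(x₀ : X)‖ • w‖ := rfl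
      rw [hnorm] at hkey
      have : ‖(x₀ : X)‖⁻¹ • (x₀ : X) - w = ‖(x₀ : X)‖⁻¹ • ((x₀ : X) - ‖(x₀ : X)‖ • w) := by
        rw [smul_sub, smul_smul, inv_mul_cancel₀ (ne_of_gt hnx), one_smul]
      have hxn : ‖x₀‖ = ‖(x₀ : X)‖ := rfl
      rw [hxn] at hkey
      rw [this, norm_smul, norm_inv, norm_norm, le_inv_mul_iff₀ hnx]
      linarith
  choose e he1 he2 he3 using hriesz
  -- separation of K e n
  have hsep : ∀ n m : ℕ, n < m → (1 / 2 : ℝ) ≤ ‖K (e n) - K (e m)‖ := by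
    intro n m hnm
    have hw : T (e n) + e m - T (e m) ∈ R (n + 1) := by
      apply Submodule.sub_mem
      apply Submodule.add_mem
      · exact hmaps n _ (he1 n)
      · exact hmono hnm (he1 m)
      · exact hmono (Nat.succ_le_succ hnm.le) (hmaps m _ (he1 m))
    have : K (e n) - K (e m) = e n - (T (e n) + e m - T (e m)) := by
      rw [hTapp, hTapp]; abel
    rw [this]
    exact he3 n _ hw
  -- contradiction with compactness
  have hmem : ∀ n, K (e n) ∈ s := fun n => hKs _ (le_of_eq (he2 n))
  obtain ⟨y, -, φ, hφ, hconv⟩ := hs.tendsto_subseq hmem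
  have hcauchy := hconv.cauchySeq
  rw [Metric.cauchySeq_iff] at hcauchy
  obtain ⟨N, hN⟩ := hcauchy (1 / 2) (by norm_num)
  have h1 := hN N (le_refl N) (N + 1) (Nat.le_succ N)
  have h2 := hsep (φ N) (φ (N + 1)) (hφ (Nat.lt_succ_self N))
  rw [dist_eq_norm] at h1
  simp only [Function.comp_apply] at h1
  linarith

end FredholmAux

/-- Abstract existence via Lax–Milgram for the shifted form, compactness of the zero-order
perturbation, and the Fredholm alternative: for every bounded linear functional `F` there is a
unique `u` with `L u v = F v` for all `v`. -/
theorem abstract_existence_fredholm {H E : Type*}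
    [NormedAddCommGroup H] [InnerProductSpace ℝ H] [CompleteSpace H]
    [NormedAddCommGroup E] [InnerProductSpace ℝ E] [CompleteSpace E]
    (L : H → H → ℝ)
    (hadd₁ : ∀ a b v : H, L (a + b) v = L a v + L b v)
    (hsmul₁ : ∀ (c : ℝ) (a v : H), L (c • a) v = c * L a v)
    (hadd₂ : ∀ a u v : H, L a (u + v) = L a u + L a v)
    (hsmul₂ : ∀ (c : ℝ) (a v : H), L a (c • v) = c * L a v)
    (Cb : ℝ) (hbound : ∀ u v : H, |L u v| ≤ Cb * ‖u‖ * ‖v‖)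
    (p : ℝ) (hp : 0 < p)
    (J : H →L[ℝ] E) (hJ : IsCompactOperator J)
    (c : ℝ) (hc : 0 < c)
    (hcoer : ∀ u : H, c * ‖u‖ ^ 2 ≤ L u u + p * (inner ℝ (J u) (J u) : ℝ))
    (hLaxMilgram : ∀ F : H →L[ℝ] ℝ, ∃! y : H,
      ∀ v : H, L y v + p * (inner ℝ (J y) (J v) : ℝ) = F v)
    (huniq : ∀ u : H, (∀ v : H, L u v = 0) → u = 0) :
    ∀ F : H →L[ℝ] ℝ, ∃! u : H, ∀ v : H, L u v = F v := by
  classical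
  have hsolex : ∀ F : H →L[ℝ] ℝ, ∃ y : H,
      ∀ v : H, L y v + p * (inner ℝ (J y) (J v) : ℝ) = F v := fun F => (hLaxMilgram F).exists
  choose sol hsolspec using hsolex
  have hsoluniq : ∀ (F : H →L[ℝ] ℝ) (y : H),
      (∀ v : H, L y v + p * (inner ℝ (J y) (J v) : ℝ) = F v) → y = sol F :=
    fun F y hy => (hLaxMilgram F).unique hy (hsolspec F)
  set Φ : E → (H →L[ℝ] ℝ) := fun e => p • ((innerSL ℝ e).comp J) with hΦ
  have hΦapp : ∀ (e : E) (v : H), Φ e v = p * (inner ℝ e (J v) : ℝ) := fun e v => rfl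
  set Rf : E → H := fun e => sol (Φ e) with hRfdef
  have hRspec : ∀ (e : E) (v : H), L (Rf e) v + p * (inner ℝ (J (Rf e)) (J v) : ℝ)
      = p * (inner ℝ e (J v) : ℝ) := by
    intro e v
    have := hsolspec (Φ e) v
    rwa [hΦapp] at this
  have hRuniq : ∀ (e : E) (y : H),
      (∀ v : H, L y v + p * (inner ℝ (J y) (J v) : ℝ) = p * (inner ℝ e (J v) : ℝ)) → y = Rf e := by
    intro e y hy
    exact hsoluniq (Φ e) y (fun v => by rw [hΦapp]; exact hy v)
  have hRadd : ∀ a b : E, Rf (a + b) = Rf a + Rf b := by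
    intro a b
    symm
    apply hRuniq
    intro v
    rw [hadd₁, map_add, inner_add_left, inner_add_left]
    linear_combination hRspec a v + hRspec b v
  have hRsmul : ∀ (r : ℝ) (a : E), Rf (r • a) = r • Rf a := by
    intro r a
    symm
    apply hRuniq
    intro v
    rw [hsmul₁, _root_.map_smul, real_inner_smul_left, real_inner_smul_left]
    linear_combination r * hRspec a v
  have hRbound : ∀ e : E, ‖Rf e‖ ≤ (p * ‖J‖ / c) * ‖e‖ := by
    intro e
    have h1 : c * ‖Rf e‖ ^ 2 ≤ p * (inner ℝ e (J (Rf e)) : ℝ) := by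
      have h2 := hcoer (Rf e)
      have h3 := hRspec e (Rf e)
      linarith
    have h3 : (inner ℝ e (J (Rf e)) : ℝ) ≤ ‖e‖ * (‖J‖ * ‖Rf e‖) :=
      le_trans (real_inner_le_norm _ _)
        (mul_le_mul_of_nonneg_left (J.le_opNorm _) (norm_nonneg e))
    rcases eq_or_lt_of_le (norm_nonneg (Rf e)) with h0 | h0
    · rw [← h0]
      positivity
    · rw [div_mul_eq_mul_div, le_div_iff₀ hc]
      have h4 : (c * ‖Rf e‖) * ‖Rf e‖ ≤ (p * ‖J‖ * ‖e‖) * ‖Rf e‖ := by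
        nlinarith
      have := le_of_mul_le_mul_right h4 h0
      linarith
  let Rlin : E →ₗ[ℝ] H :=
    { toFun := Rf, map_add' := hRadd, map_smul' := hRsmul }
  let Rclm : E →L[ℝ] H := Rlin.mkContinuous (p * ‖J‖ / c) hRbound
  let Kc : H →L[ℝ] H := Rclm.comp J
  have hKcapp : ∀ u : H, Kc u = Rf (J u) := fun u => rfl
  have hKcompact : IsCompactOperator ⇑Kc := hJ.continuous_comp Rclm.continuous
  have hKc : ∀ u v : H, L (Kc u) v + p * (inner ℝ (J (Kc u)) (J v) : ℝ)
      = p * (inner ℝ (J u) (J v) : ℝ) := by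
    intro u v
    rw [hKcapp]
    exact hRspec (J u) v
  have hinj : ∀ u : H, u = Kc u → u = 0 := by
    intro u hu
    apply huniq
    intro v
    have h1 := hKc u v
    rw [← hu] at h1
    linarith
  have hsurj := fredholm_surjective Kc hKcompact hinj
  intro F
  obtain ⟨u, hu⟩ := hsurj (sol F)
  have hTu : u - Kc u = sol F := by
    rw [← hu]
    simp [ContinuousLinearMap.sub_apply]
  have hueq : u = sol F + Kc u := by
    rw [← hTu]; abel
  have hexists : ∀ v : H, L u v = F v := by
    intro v
    have h1 := hsolspec F v
    have h2 := hKc u v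
    have h3 : L u v = L (sol F) v + L (Kc u) v := by
      nth_rewrite 1 [hueq]
      exact hadd₁ _ _ _
    have h4 : (inner ℝ (J u) (J v) : ℝ)
        = (inner ℝ (J (sol F)) (J v) : ℝ) + (inner ℝ (J (Kc u)) (J v) : ℝ) := by
      nth_rewrite 1 [hueq]
      rw [map_add, inner_add_left]
    linear_combination h3 + h1 + h2 + p * h4
  refine ⟨u, hexists, ?_⟩
  intro y hy
  have hz : ∀ v : H, L (y - u) v = 0 := by
    intro v
    have hrw : y - u = y + (-1 : ℝ) • u := by
      rw [neg_one_smul]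
      abel
    rw [hrw, hadd₁, hsmul₁, hy v, hexists v]
    ring
  exact sub_eq_zero.mp (huniq _ hz)
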